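/- Let Γ be a finite directed graph and let L be a proper closed inverse subsemigroup of the graph inverse semigroup S(Γ). Then exactly one of the following holds: (1) L consists of a finite chain of idempotents; (2) L consists of an infinite chain of idempotents; (3) L = L_{p,d} = {(vp^r d, vp^s d) : r,s ≥ 0, v a suffix of p} ∪ {(q,q) : q a suffix of d} for some nonempty directed circuit p in Γ and some directed path d starting at the basepoint of p, where p and d share no nontrivial common prefix. -/

import Mathlib

/-- A (finite) directed graph: vertices, edges, and source/target maps. -/
structure DGraph where
  V : Type
  E : Type
  src : E → V
  tgt : E → V

namespace DGraph

/-- The vertex reached after traversing a list of edges from a vertex. -/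
def walkEnd (G : DGraph) : G.V → List G.E → G.V
  | v, [] => v
  | _, e :: l => walkEnd G (G.tgt e) l

/-- The list of edges forms a directed walk starting at the given vertex. -/
def IsWalk (G : DGraph) : G.V → List G.E → Prop
  | _, [] => True
  | v, e :: l => G.src e = v ∧ IsWalk G (G.tgt e) l

variable (G : DGraph)

@[simp] theorem walkEnd_nil (v : G.V) : G.walkEnd v [] = v := rfl
@[simp] theorem walkEnd_cons (v : G.V) (e : G.E) (l : List G.E) :
    G.walkEnd v (e :: l) = G.walkEnd (G.tgt e) l := rfl
@[simp] theorem isWalk_nil (v : G.V) : G.IsWalk v [] := trivial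
@[simp] theorem isWalk_cons (v : G.V) (e : G.E) (l : List G.E) :
    G.IsWalk v (e :: l) ↔ G.src e = v ∧ G.IsWalk (G.tgt e) l := Iff.rfl

theorem isWalk_append (v : G.V) (l1 l2 : List G.E) :
    G.IsWalk v (l1 ++ l2) ↔ G.IsWalk v l1 ∧ G.IsWalk (G.walkEnd v l1) l2 := by
  induction l1 generalizing v with
  | nil => simp [IsWalk, walkEnd]
  | cons e l ih => simp [IsWalk, walkEnd, ih, and_assoc]

/-- A directed path in `G`: an initial vertex together with a compatible
list of edges, traversed in order (empty paths are allowed). -/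
structure DPath (G : DGraph) where
  first : G.V
  edges : List G.E
  wf : G.IsWalk first edges

namespace DPath

variable {G}

/-- The terminal vertex of a directed path. -/
def last (p : G.DPath) : G.V := G.walkEnd p.first p.edges

/-- The list of vertices lying on a directed path. -/
def vertexList (p : G.DPath) : List G.V := p.first :: p.edges.map G.tgt

/-- `q` is a suffix (terminal segment) of `p`: `p = l ⬝ q` for some edge list `l`. -/
def IsSuffixOf (q p : G.DPath) : Prop :=
  ∃ l : List G.E, p.edges = l ++ q.edges ∧ q.first = G.walkEnd p.first l

end DPath

theorem isWalk_chopAppend {u v w : G.DPath} (hs : v.IsSuffixOf u) (hvw : v.first = w.first) :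
    G.IsWalk u.first (u.edges.take (u.edges.length - v.edges.length) ++ w.edges) := by
  obtain ⟨l, hl, hfst⟩ := hs
  rw [hl]
  have hlen : (l ++ v.edges).length - v.edges.length = l.length := by simp
  rw [hlen, List.take_left, G.isWalk_append]
  have hu := u.wf
  rw [hl, G.isWalk_append] at hu
  refine ⟨hu.1, ?_⟩
  rw [← hfst, hvw]
  exact w.wf

theorem isWalk_concat {p q : G.DPath} (h : q.first = p.last) :
    G.IsWalk p.first (p.edges ++ q.edges) := by
  rw [G.isWalk_append]
  refine ⟨p.wf, ?_⟩
  show G.IsWalk p.last q.edges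
  rw [← h]
  exact q.wf

/-- Concatenation of composable directed paths. -/
def concatPath (p q : G.DPath) (h : q.first = p.last) : G.DPath :=
  ⟨p.first, p.edges ++ q.edges, G.isWalk_concat h⟩

theorem isWalk_replicate (a : G.E) (h : G.tgt a = G.src a) (m : ℕ) :
    G.IsWalk (G.src a) (List.replicate m a) := by
  induction m with
  | zero => trivial
  | succ n ih => rw [List.replicate_succ, G.isWalk_cons]; exact ⟨rfl, by rw [h]; exact ih⟩

/-- The path traversing a loop `a` exactly `m` times. -/
def loopPow (a : G.E) (h : G.tgt a = G.src a) (m : ℕ) : G.DPath :=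
  ⟨G.src a, List.replicate m a, G.isWalk_replicate a h m⟩

/-- `p` is a nonempty directed circuit. -/
def IsCircuit (p : G.DPath) : Prop := p.edges ≠ [] ∧ p.last = p.first

/-- `p` and `d` share no nontrivial common prefix (initial segment). -/
def NoCommonPrefix (p d : G.DPath) : Prop :=
  ∀ l : List G.E, l ≠ [] → l <+: p.edges → ¬ l <+: d.edges

end DGraph

/-- The underlying set of the graph inverse semigroup `S(Γ)`: pairs of directed
paths with the same initial vertex, together with a zero element. -/
inductive GIS (G : DGraph) where
  | zero : GIS G
  | pair (a b : G.DPath) (h : a.first = b.first) : GIS G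

namespace GIS

open scoped Classical in
/-- The multiplication of the graph inverse semigroup:
`(t,u)(v,w) = (t,pw)` if `u = pv`, `(pt,w)` if `v = pu`, and `0` otherwise. -/
noncomputable def mul {G : DGraph} : GIS G → GIS G → GIS G
  | .zero, _ => .zero
  | .pair _ _ _, .zero => .zero
  | .pair t u h1, .pair v w h2 =>
    if hs : v.IsSuffixOf u then
      .pair t ⟨t.first, u.edges.take (u.edges.length - v.edges.length) ++ w.edges,
        by rw [h1]; exact G.isWalk_chopAppend hs h2⟩ rfl
    else if hs' : u.IsSuffixOf v then
      .pair ⟨v.first, v.edges.take (v.edges.length - u.edges.length) ++ t.edges,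
        G.isWalk_chopAppend hs' h1.symm⟩ w h2
    else .zero

noncomputable instance {G : DGraph} : Mul (GIS G) := ⟨GIS.mul⟩

/-- The inverse: `(v,w)⁻¹ = (w,v)` and `0⁻¹ = 0`. -/
def inv {G : DGraph} : GIS G → GIS G
  | .zero => .zero
  | .pair a b h => .pair b a h.symm

/-- The natural partial order: `x ≤ y` iff `x = e * y` for some idempotent `e`. -/
def le {G : DGraph} (x y : GIS G) : Prop := ∃ e : GIS G, e * e = e ∧ x = e * y

end GIS

/-- `L` is a closed inverse subsemigroup of `S(Γ)`: a nonempty subset closed under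
multiplication, inverses, and upward closed in the natural partial order. -/
def IsCISS (G : DGraph) (L : Set (GIS G)) : Prop :=
  L.Nonempty ∧ (∀ a ∈ L, ∀ b ∈ L, a * b ∈ L) ∧ (∀ a ∈ L, a.inv ∈ L) ∧
    (∀ a ∈ L, ∀ s : GIS G, GIS.le a s → s ∈ L)

/-- The closed inverse subsemigroup `↑{(u,u)}` of (finite) chain type:
all `(q,q)` with `q` a suffix of `u`. -/
def chainSet (G : DGraph) (u : G.DPath) : Set (GIS G) :=
  {x | ∃ q : G.DPath, q.IsSuffixOf u ∧ x = GIS.pair q q rfl}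

/-- The edge list of the `r`-th power of the path `p`. -/
def powEdges {G : DGraph} (p : G.DPath) (r : ℕ) : List G.E :=
  (List.replicate r p.edges).flatten

/-- The closed inverse subsemigroup of cycle type
`L_{p,d} = {(v p^r d, v p^s d) : r,s ≥ 0, v a suffix of p} ∪ {(q,q) : q a suffix of d}`. -/
def cycleSet (G : DGraph) (p d : G.DPath) : Set (GIS G) :=
  {x | (∃ (r s : ℕ) (v a b : G.DPath) (h : a.first = b.first),
          v.IsSuffixOf p ∧ x = GIS.pair a b h ∧
          a.first = v.first ∧ a.edges = v.edges ++ powEdges p r ++ d.edges ∧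
          b.first = v.first ∧ b.edges = v.edges ++ powEdges p s ++ d.edges) ∨
       (∃ q : G.DPath, q.IsSuffixOf d ∧ x = GIS.pair q q rfl)}

/-- `L` is a chain of idempotents: all elements are idempotent and any two are
comparable in the natural partial order. -/
def IsChainOfIdem (G : DGraph) (L : Set (GIS G)) : Prop :=
  (∀ x ∈ L, x * x = x) ∧ ∀ x ∈ L, ∀ y ∈ L, GIS.le x y ∨ GIS.le y x

/-- The set of right cosets `↑(Lt)` (for `t` with `t t⁻¹ ∈ L`) of a closed inverse
subsemigroup `L`. -/
def cosets (G : DGraph) (L : Set (GIS G)) : Set (Set (GIS G)) :=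
  {C | ∃ t : GIS G, t * t.inv ∈ L ∧ C = {s | ∃ x ∈ L, GIS.le (x * t) s}}

/-- `H` and `K` are conjugate: for some `s`, `s⁻¹Hs ⊆ K` and `sKs⁻¹ ⊆ H`. -/
def Conjugate (G : DGraph) (H K : Set (GIS G)) : Prop :=
  ∃ s : GIS G, (∀ h ∈ H, s.inv * h * s ∈ K) ∧ (∀ k ∈ K, s * k * s.inv ∈ H)

/-- The set of directed paths with initial vertex `v` whose first edge (if any)
is not an edge of `w`. -/
def Npaths (G : DGraph) (v : G.V) (w : G.DPath) : Set G.DPath :=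
  {t | t.first = v ∧ ∀ e, t.edges.head? = some e → e ∉ w.edges}

section Aux
variable {G : DGraph}

theorem DGraph.walkEnd_append (v : G.V) (l1 l2 : List G.E) :
    G.walkEnd v (l1 ++ l2) = G.walkEnd (G.walkEnd v l1) l2 := by
  induction l1 generalizing v with
  | nil => rfl
  | cons e l ih => simp [ih]

namespace DGraph.DPath

theorem ext' {p q : G.DPath} (h1 : p.first = q.first) (h2 : p.edges = q.edges) : p = q := by
  cases p; cases q; simp_all

theorem suffix_refl (p : G.DPath) : p.IsSuffixOf p := ⟨[], rfl, rfl⟩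

theorem suffix_len_le {q p : G.DPath} (h : q.IsSuffixOf p) : q.edges.length ≤ p.edges.length := by
  obtain ⟨l, hl, -⟩ := h; simp [hl]

theorem suffix_antisymm {q p : G.DPath} (h : q.IsSuffixOf p)
    (hlen : p.edges.length ≤ q.edges.length) : q = p := by
  obtain ⟨l, hl, hf⟩ := h
  have : l = [] := by
    have := congrArg List.length hl
    simp at this
    exact List.eq_nil_of_length_eq_zero (by omega)
  subst this
  exact (ext' (by simp [hf]) (by simp [hl])).symm

/-- Two suffixes of a common path are comparable. -/
theorem suffix_of_suffix {q1 q2 p : G.DPath} (h1 : q1.IsSuffixOf p) (h2 : q2.IsSuffixOf p)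
    (hlen : q1.edges.length ≤ q2.edges.length) : q1.IsSuffixOf q2 := by
  obtain ⟨l1, hl1, hf1⟩ := h1
  obtain ⟨l2, hl2, hf2⟩ := h2
  have hlen2 : l2.length ≤ l1.length := by
    have e1 := congrArg List.length hl1
    have e2 := congrArg List.length hl2
    simp at e1 e2; omega
  have heq : l1 ++ q1.edges = l2 ++ q2.edges := hl1 ▸ hl2 ▸ rfl
  have hpre : l2 ++ l1.drop l2.length = l1 := by
    have : (l1 ++ q1.edges).take l2.length = l2 := by
      rw [heq, List.take_append_of_le_length (le_refl _ |>.trans (by simp))]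
      simp
    calc l2 ++ l1.drop l2.length = (l1 ++ q1.edges).take l2.length ++ l1.drop l2.length := by rw [this]
    _ = l1.take l2.length ++ l1.drop l2.length := by rw [List.take_append_of_le_length hlen2]
    _ = l1 := List.take_append_drop _ _
  refine ⟨l1.drop l2.length, ?_, ?_⟩
  · have : l2 ++ q2.edges = l2 ++ (l1.drop l2.length ++ q1.edges) := by
      rw [← List.append_assoc, hpre, heq]
    exact (List.append_cancel_left this)
  · rw [hf1, hf2]
    nth_rewrite 1 [← hpre]
    rw [DGraph.walkEnd_append]

theorem suffix_trans {q1 q2 p : G.DPath} (h1 : q1.IsSuffixOf q2) (h2 : q2.IsSuffixOf p) :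
    q1.IsSuffixOf p := by
  obtain ⟨l1, hl1, hf1⟩ := h1
  obtain ⟨l2, hl2, hf2⟩ := h2
  exact ⟨l2 ++ l1, by rw [hl2, hl1, List.append_assoc], by
    rw [hf1, hf2, DGraph.walkEnd_append]⟩

end DGraph.DPath
end Aux
namespace GIS
variable {G : DGraph}

theorem mul_def (x y : GIS G) : x * y = GIS.mul x y := rfl

@[simp] theorem zero_mul' (y : GIS G) : (GIS.zero : GIS G) * y = GIS.zero := rfl

@[simp] theorem mul_zero' (x : GIS G) : x * (GIS.zero : GIS G) = GIS.zero := by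
  cases x <;> rfl

theorem pair_mul_pair_left {t u v w : G.DPath} (h1 : t.first = u.first) (h2 : v.first = w.first)
    (hs : v.IsSuffixOf u) :
    GIS.pair t u h1 * GIS.pair v w h2 =
      GIS.pair t ⟨t.first, u.edges.take (u.edges.length - v.edges.length) ++ w.edges,
        by rw [h1]; exact G.isWalk_chopAppend hs h2⟩ rfl := by
  show GIS.mul _ _ = _
  simp only [GIS.mul]
  rw [dif_pos hs]

theorem pair_mul_pair_right {t u v w : G.DPath} (h1 : t.first = u.first) (h2 : v.first = w.first)
    (hns : ¬ v.IsSuffixOf u) (hs : u.IsSuffixOf v) :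
    GIS.pair t u h1 * GIS.pair v w h2 =
      GIS.pair ⟨v.first, v.edges.take (v.edges.length - u.edges.length) ++ t.edges,
        G.isWalk_chopAppend hs h1.symm⟩ w h2 := by
  show GIS.mul _ _ = _
  simp only [GIS.mul]
  rw [dif_neg hns, dif_pos hs]

theorem pair_mul_pair_zero {t u v w : G.DPath} (h1 : t.first = u.first) (h2 : v.first = w.first)
    (hns : ¬ v.IsSuffixOf u) (hns' : ¬ u.IsSuffixOf v) :
    GIS.pair t u h1 * GIS.pair v w h2 = GIS.zero := by
  show GIS.mul _ _ = _
  simp only [GIS.mul]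
  rw [dif_neg hns, dif_neg hns']

theorem pair_congr {a b a' b' : G.DPath} (h : a.first = b.first) (ha : a = a') (hb : b = b') :
    GIS.pair a b h = GIS.pair a' b' (ha ▸ hb ▸ h) := by subst ha; subst hb; rfl

/-- exact composition: (t,u)(u,w) = (t,w) -/
theorem mul_exact {t u w : G.DPath} (h1 : t.first = u.first) (h2 : u.first = w.first) :
    GIS.pair t u h1 * GIS.pair u w h2 = GIS.pair t w (h1.trans h2) := by
  rw [pair_mul_pair_left h1 h2 (DGraph.DPath.suffix_refl u)]
  refine pair_congr _ rfl (DGraph.DPath.ext' ?_ ?_)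
  · exact h1.trans h2
  · simp

theorem inv_mul_self {a b : G.DPath} (h : a.first = b.first) :
    (GIS.pair a b h).inv * GIS.pair a b h = GIS.pair b b rfl := by
  show GIS.pair b a h.symm * GIS.pair a b h = _
  rw [mul_exact h.symm h]

theorem pair_idem {q : G.DPath} (h : q.first = q.first) :
    GIS.pair q q h * GIS.pair q q h = GIS.pair q q h := mul_exact h h

/-- nonzero idempotents are of the form (q,q) -/
theorem eq_of_pair_idem {a b : G.DPath} (h : a.first = b.first)
    (hid : GIS.pair a b h * GIS.pair a b h = GIS.pair a b h) : a = b := by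
  by_cases hs : a.IsSuffixOf b
  · rw [pair_mul_pair_left h h hs] at hid
    injection hid with _ h2
    have := congrArg (fun p : G.DPath => p.edges.length) h2
    simp at this
    have hlen : b.edges.length ≤ a.edges.length := by omega
    exact DGraph.DPath.suffix_antisymm hs hlen
  · by_cases hs' : b.IsSuffixOf a
    · rw [pair_mul_pair_right h h hs hs'] at hid
      injection hid with h2 _
      have := congrArg (fun p : G.DPath => p.edges.length) h2
      simp at this
      have hlen : a.edges.length ≤ b.edges.length := by omega
      exact (DGraph.DPath.suffix_antisymm hs' hlen).symm
    · rw [pair_mul_pair_zero h h hs hs'] at hid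
      cases hid
  
end GIS
namespace GIS
variable {G : DGraph}

theorem zero_le (s : GIS G) : GIS.le GIS.zero s := ⟨GIS.zero, rfl, (zero_mul' s).symm⟩

theorem le_strip {a b a' b' : G.DPath} (h : a.first = b.first) (h' : a'.first = b'.first)
    (l : List G.E) (ha : a.edges = l ++ a'.edges) (hb : b.edges = l ++ b'.edges)
    (hfa : a'.first = G.walkEnd a.first l) :
    GIS.le (GIS.pair a b h) (GIS.pair a' b' h') := by
  refine ⟨GIS.pair a a rfl, pair_idem rfl, ?_⟩
  have hs : a'.IsSuffixOf a := ⟨l, ha, hfa⟩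
  rw [pair_mul_pair_left rfl h' hs]
  have hlen : a.edges.length - a'.edges.length = l.length := by
    have := congrArg List.length ha; simp at this; omega
  have htake : a.edges.take (a.edges.length - a'.edges.length) = l := by
    rw [hlen, ha, List.take_left]
  refine pair_congr h rfl (DGraph.DPath.ext' ?_ ?_)
  · exact h.symm
  · show b.edges = _ ++ b'.edges
    rw [htake, hb]

end GIS

section CISS
variable {G : DGraph} {L : Set (GIS G)} (hL : IsCISS G L)
include hL

theorem L_univ_of_zero (hz : GIS.zero ∈ L) : L = Set.univ := by
  ext s
  simp only [Set.mem_univ, iff_true]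
  exact hL.2.2.2 _ hz s (GIS.zero_le s)

theorem mem_inv {a b : G.DPath} {h : a.first = b.first} (ha : GIS.pair a b h ∈ L) :
    GIS.pair b a h.symm ∈ L := hL.2.2.1 _ ha

theorem mem_diag_left {a b : G.DPath} {h : a.first = b.first} (ha : GIS.pair a b h ∈ L) :
    GIS.pair a a rfl ∈ L := by
  have hm := hL.2.1 _ ha _ (mem_inv hL ha)
  rw [GIS.mul_exact h h.symm] at hm
  exact hm

theorem mem_diag_right {a b : G.DPath} {h : a.first = b.first} (ha : GIS.pair a b h ∈ L) :
    GIS.pair b b rfl ∈ L := mem_diag_left hL (mem_inv hL ha)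

/-- composing (t,u)(v,w) when v is a suffix of u -/
theorem comp_right {t u v w : G.DPath} {h1 : t.first = u.first} {h2 : v.first = w.first}
    (ht : GIS.pair t u h1 ∈ L) (hv : GIS.pair v w h2 ∈ L) (hs : v.IsSuffixOf u) :
    ∃ (Y : G.DPath) (hY : t.first = Y.first), GIS.pair t Y hY ∈ L ∧ Y.first = t.first ∧
      Y.edges = u.edges.take (u.edges.length - v.edges.length) ++ w.edges := by
  have hm := hL.2.1 _ ht _ hv
  rw [GIS.pair_mul_pair_left h1 h2 hs] at hm
  exact ⟨_, _, hm, rfl, rfl⟩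

/-- composing (t,u)(v,w) when u is a suffix of v -/
theorem comp_left {t u v w : G.DPath} {h1 : t.first = u.first} {h2 : v.first = w.first}
    (ht : GIS.pair t u h1 ∈ L) (hv : GIS.pair v w h2 ∈ L) (hs : u.IsSuffixOf v) :
    ∃ (X : G.DPath) (hX : X.first = w.first), GIS.pair X w hX ∈ L ∧ X.first = v.first ∧
      X.edges = v.edges.take (v.edges.length - u.edges.length) ++ t.edges := by
  by_cases hvu : v.IsSuffixOf u
  · have huv : u = v := DGraph.DPath.suffix_antisymm hs (DGraph.DPath.suffix_len_le hvu)
    subst huv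
    have hm := hL.2.1 _ ht _ hv
    rw [GIS.mul_exact h1 h2] at hm
    exact ⟨t, h1.trans h2, hm, h1, by simp⟩
  · have hm := hL.2.1 _ ht _ hv
    rw [GIS.pair_mul_pair_right h1 h2 hvu hs] at hm
    exact ⟨_, _, hm, rfl, rfl⟩

variable (h0 : GIS.zero ∉ L)
include h0

theorem comparab {a b c e : G.DPath} {h1 : a.first = b.first} {h2 : c.first = e.first}
    (ha : GIS.pair a b h1 ∈ L) (hc : GIS.pair c e h2 ∈ L) :
    c.IsSuffixOf b ∨ b.IsSuffixOf c := by
  by_contra hcon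
  push_neg at hcon
  have hm := hL.2.1 _ ha _ hc
  rw [GIS.pair_mul_pair_zero h1 h2 hcon.1 hcon.2] at hm
  exact h0 hm

/-- chain property of idempotents in L -/
theorem W_chain {q1 q2 : G.DPath} (hq1 : GIS.pair q1 q1 rfl ∈ L) (hq2 : GIS.pair q2 q2 rfl ∈ L)
    (hlen : q1.edges.length ≤ q2.edges.length) : q1.IsSuffixOf q2 := by
  rcases comparab hL h0 hq2 hq1 with hs | hs
  · exact hs
  · exact (DGraph.DPath.suffix_antisymm hs hlen) ▸ DGraph.DPath.suffix_refl q2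

end CISS
section Pow
variable {G : DGraph}

@[simp] theorem powEdges_zero (p : G.DPath) : powEdges p 0 = [] := rfl

theorem powEdges_succ (p : G.DPath) (r : ℕ) :
    powEdges p (r+1) = p.edges ++ powEdges p r := by
  simp [powEdges, List.replicate_succ]

theorem powEdges_add (p : G.DPath) (a b : ℕ) :
    powEdges p (a+b) = powEdges p a ++ powEdges p b := by
  induction a with
  | zero => simp
  | succ m ih =>
    rw [show m+1+b = (m+b)+1 by omega, powEdges_succ, ih, powEdges_succ, List.append_assoc]

theorem powEdges_one (p : G.DPath) : powEdges p 1 = p.edges := by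
  simp [powEdges]

theorem powEdges_succ' (p : G.DPath) (r : ℕ) :
    powEdges p (r+1) = powEdges p r ++ p.edges := by
  rw [powEdges_add, powEdges_one]

theorem powEdges_length (p : G.DPath) (r : ℕ) :
    (powEdges p r).length = r * p.edges.length := by
  induction r with
  | zero => simp
  | succ m ih => rw [powEdges_succ, List.length_append, ih]; ring

variable {p : G.DPath} (hc : G.IsCircuit p)
include hc

theorem walkEnd_powEdges (r : ℕ) : G.walkEnd p.first (powEdges p r) = p.first := by
  induction r with
  | zero => rfl
  | succ m ih => rw [powEdges_succ', DGraph.walkEnd_append, ih]; exact hc.2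

theorem isWalk_powEdges (r : ℕ) : G.IsWalk p.first (powEdges p r) := by
  induction r with
  | zero => simp
  | succ m ih =>
    rw [powEdges_succ', G.isWalk_append]
    exact ⟨ih, by rw [walkEnd_powEdges hc]; exact p.wf⟩

theorem isWalk_pow_d {d : G.DPath} (hd : d.first = p.first) (r : ℕ) :
    G.IsWalk p.first (powEdges p r ++ d.edges) := by
  rw [G.isWalk_append]
  refine ⟨isWalk_powEdges hc r, ?_⟩
  rw [walkEnd_powEdges hc, ← hd]
  exact d.wf

end Pow
section CY
variable {G : DGraph} {L : Set (GIS G)} (hL : IsCISS G L) (h0 : GIS.zero ∉ L)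
variable {p d : G.DPath} (hc : G.IsCircuit p) (hdp : d.first = p.first)
variable {n : ℕ} (hn_pos : 0 < n) (hplen : p.edges.length = n)
variable {t : G.DPath} {htf : t.first = d.first} (htmem : GIS.pair t d htf ∈ L)
  (hte : t.edges = p.edges ++ d.edges)
include hL h0 hc hdp hn_pos hplen htmem hte

theorem Pd_mem (r : ℕ) : ∃ (a : G.DPath) (ha : a.first = d.first),
    GIS.pair a d ha ∈ L ∧ a.edges = powEdges p r ++ d.edges := by
  induction r with
  | zero =>
    refine ⟨d, rfl, mem_diag_right hL htmem, by simp⟩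
  | succ m ih =>
    obtain ⟨a, ha, hmem, hae⟩ := ih
    have hdW : GIS.pair d d rfl ∈ L := mem_diag_right hL htmem
    have haW : GIS.pair a a rfl ∈ L := mem_diag_left hL hmem
    have hlen : d.edges.length ≤ a.edges.length := by
      rw [hae]; simp
    have hs : d.IsSuffixOf a := W_chain hL h0 hdW haW hlen
    obtain ⟨X, hX, hXmem, hXf, hXe⟩ := comp_left hL htmem hmem hs
    refine ⟨X, hX, hXmem, ?_⟩
    have htake : a.edges.take (a.edges.length - d.edges.length) = powEdges p m := by
      have hlen2 : a.edges.length - d.edges.length = (powEdges p m).length := by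
        have := congrArg List.length hae; simp at this; omega
      rw [hlen2, hae, List.take_left]
    rw [hXe, htake, hte, powEdges_succ', List.append_assoc]

theorem PRS_mem (r s : ℕ) : ∃ (a b : G.DPath) (hab : a.first = b.first),
    GIS.pair a b hab ∈ L ∧ a.first = d.first ∧ a.edges = powEdges p r ++ d.edges ∧
      b.first = d.first ∧ b.edges = powEdges p s ++ d.edges := by
  obtain ⟨a, ha, hamem, hae⟩ := Pd_mem hL h0 hc hdp hn_pos hplen htmem hte r
  obtain ⟨b, hb, hbmem, hbe⟩ := Pd_mem hL h0 hc hdp hn_pos hplen htmem hte s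
  have hm := hL.2.1 _ hamem _ (mem_inv hL hbmem)
  rw [GIS.mul_exact ha hb.symm] at hm
  exact ⟨a, b, ha.trans hb.symm, hm, ha, hae, hb, hbe⟩

theorem cy_supset : cycleSet G p d ⊆ L := by
  rintro z (⟨r, s, v, a, b, h, hvs, rfl, haf, hae, hbf, hbe⟩ | ⟨q, hqs, rfl⟩)
  · obtain ⟨lv, hlv, hvf⟩ := hvs
    obtain ⟨A, B, hAB, hABmem, hAf, hAe, hBf, hBe⟩ :=
      PRS_mem hL h0 hc hdp hn_pos hplen htmem hte (r+1) (s+1)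
    refine hL.2.2.2 _ hABmem _ (GIS.le_strip hAB h lv ?_ ?_ ?_)
    · rw [hAe, powEdges_succ, hlv, hae]; simp [List.append_assoc]
    · rw [hBe, powEdges_succ, hlv, hbe]; simp [List.append_assoc]
    · rw [haf, hvf, hAf, hdp]
  · have hdd : GIS.pair d d rfl ∈ L := mem_diag_right hL htmem
    obtain ⟨lq, hlq, hqf⟩ := hqs
    exact hL.2.2.2 _ hdd _ (GIS.le_strip rfl rfl lq hlq hlq hqf)

end CY
section CY2
set_option linter.unusedSectionVars false
variable {G : DGraph} {L : Set (GIS G)} (hL : IsCISS G L) (h0 : GIS.zero ∉ L)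
variable {p d : G.DPath} (hc : G.IsCircuit p) (hdp : d.first = p.first)
variable {n : ℕ} (hn_pos : 0 < n) (hplen : p.edges.length = n)
variable {t : G.DPath} {htf : t.first = d.first} (htmem : GIS.pair t d htf ∈ L)
  (hte : t.edges = p.edges ++ d.edges)
include hL h0 hc hdp hn_pos hplen htmem hte

theorem rep (q : G.DPath) (hq : GIS.pair q q rfl ∈ L) (hlen : d.edges.length ≤ q.edges.length) :
    ∃ (v : G.DPath) (s : ℕ), v.IsSuffixOf p ∧ v.first = q.first ∧
      v.edges = p.edges.drop (n - (q.edges.length - d.edges.length) % n) ∧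
      s = (q.edges.length - d.edges.length) / n ∧
      q.edges = v.edges ++ powEdges p s ++ d.edges := by
  set D := q.edges.length - d.edges.length with hD
  set j := D % n with hj
  set s := D / n with hs
  have hjn : j < n := Nat.mod_lt _ hn_pos
  have hDsj : s * n + j = D := by
    rw [hj, hs, Nat.mul_comm]; exact Nat.div_add_mod D n
  set R := q.edges.length + 1 with hR
  obtain ⟨aR, haRf, haRmem, haRe⟩ := Pd_mem hL h0 hc hdp hn_pos hplen htmem hte R
  have haRlen : aR.edges.length = R * n + d.edges.length := by
    rw [haRe]; simp [powEdges_length, hplen]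
  have hqlen_le : q.edges.length ≤ aR.edges.length := by
    have : R ≤ R * n := Nat.le_mul_of_pos_right R hn_pos
    omega
  have hqsuff : q.IsSuffixOf aR := W_chain hL h0 hq (mem_diag_left hL haRmem) hqlen_le
  obtain ⟨l0, hl0, hqf⟩ := hqsuff
  have hsR : s + 1 ≤ R := by
    have hsD : s ≤ D := Nat.div_le_self D n
    omega
  have hsplit : powEdges p R = powEdges p (R - s - 1) ++ p.edges ++ powEdges p s := by
    rw [← powEdges_one (G := G) p, ← powEdges_add, ← powEdges_add]
    congr 1
    omega
  have hdecomp : aR.edges = (powEdges p (R-s-1) ++ p.edges.take (n - j)) ++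
      (p.edges.drop (n - j) ++ (powEdges p s ++ d.edges)) := by
    rw [haRe, hsplit]
    conv_lhs => rw [← List.take_append_drop (n - j) p.edges]
    simp only [List.append_assoc]
  have hlen_take : (p.edges.take (n - j)).length = n - j := by
    rw [List.length_take, hplen]; omega
  have hlen_eq : l0.length = (powEdges p (R-s-1) ++ p.edges.take (n-j)).length := by
    have h1 := congrArg List.length hl0
    rw [List.length_append] at h1
    rw [List.length_append, hlen_take, powEdges_length, hplen]
    have h2 : (R - s - 1) * n = R * n - s * n - n := by
      rw [Nat.sub_mul, Nat.sub_mul, Nat.one_mul]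
    have h3 : (s+1) * n ≤ R * n := Nat.mul_le_mul_right n hsR
    have h4 : (s+1) * n = s * n + n := by ring
    omega
  obtain ⟨hl0eq, hqeq⟩ := List.append_inj (hl0.symm.trans hdecomp) hlen_eq
  have hqwalk : G.IsWalk q.first (p.edges.drop (n - j)) := by
    have := q.wf
    rw [hqeq, G.isWalk_append] at this
    exact this.1
  refine ⟨⟨q.first, p.edges.drop (n - j), hqwalk⟩, s,
    ⟨p.edges.take (n-j), (List.take_append_drop _ _).symm, ?_⟩, rfl, rfl, rfl, ?_⟩
  · show q.first = G.walkEnd p.first (p.edges.take (n - j))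
    rw [hqf, hl0eq, haRf, hdp, DGraph.walkEnd_append, walkEnd_powEdges hc]
  · show q.edges = p.edges.drop (n - j) ++ powEdges p s ++ d.edges
    rw [hqeq, List.append_assoc]

theorem HM {x y : G.DPath} (hxy : x.first = y.first) (hmemz : GIS.pair x y hxy ∈ L)
    (hmin : ∀ (x y : G.DPath) (hxy : x.first = y.first), GIS.pair x y hxy ∈ L → x ≠ y →
      d.edges.length ≤ y.edges.length)
    (hgap : ∀ (x y : G.DPath) (hxy : x.first = y.first), GIS.pair x y hxy ∈ L →
      (n:ℤ) ∣ ((x.edges.length:ℤ) - y.edges.length))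
    (hne : x ≠ y) (hsuf : y.IsSuffixOf x) :
    ∃ (r s : ℕ) (v : G.DPath), v.IsSuffixOf p ∧ v.first = y.first ∧
      x.edges = v.edges ++ powEdges p r ++ d.edges ∧
      y.edges = v.edges ++ powEdges p s ++ d.edges := by
  have hylt : y.edges.length < x.edges.length := by
    rcases Nat.lt_or_ge y.edges.length x.edges.length with h | h
    · exact h
    · exact absurd (DGraph.DPath.suffix_antisymm hsuf h).symm hne
  have hyd : d.edges.length ≤ y.edges.length := hmin x y hxy hmemz hne
  have hxd : d.edges.length ≤ x.edges.length := le_trans hyd hylt.le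
  obtain ⟨v, s, hv_suf, hvf, hve, hsval, hyedges⟩ :=
    rep hL h0 hc hdp hn_pos hplen htmem hte y (mem_diag_right hL hmemz) hyd
  obtain ⟨v', s', hv'_suf, hv'f, hv'e, hs'val, hxedges⟩ :=
    rep hL h0 hc hdp hn_pos hplen htmem hte x (mem_diag_left hL hmemz) hxd
  have hdvd := hgap x y hxy hmemz
  have hdvdN : n ∣ (x.edges.length - y.edges.length) := by
    have hcast : ((x.edges.length - y.edges.length : ℕ) : ℤ)
        = (x.edges.length : ℤ) - y.edges.length := by omega
    exact_mod_cast hcast ▸ hdvd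
  obtain ⟨k, hk0⟩ := hdvdN
  have hk : x.edges.length = y.edges.length + n * k := by omega
  have hmodeq : (x.edges.length - d.edges.length) % n = (y.edges.length - d.edges.length) % n := by
    rw [hk, show y.edges.length + n * k - d.edges.length
        = (y.edges.length - d.edges.length) + n * k by omega]
    exact Nat.add_mul_mod_self_left _ n k
  have hveq : v' = v := by
    refine DGraph.DPath.ext' ?_ ?_
    · rw [hv'f, hvf, hxy]
    · rw [hv'e, hve, hmodeq]
  exact ⟨s', s, v, hv_suf, hvf, by rw [hxedges, hveq], hyedges⟩

theorem cy_subset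
    (hmin : ∀ (x y : G.DPath) (hxy : x.first = y.first), GIS.pair x y hxy ∈ L → x ≠ y →
      d.edges.length ≤ y.edges.length)
    (hgap : ∀ (x y : G.DPath) (hxy : x.first = y.first), GIS.pair x y hxy ∈ L →
      (n:ℤ) ∣ ((x.edges.length:ℤ) - y.edges.length)) :
    L ⊆ cycleSet G p d := by
  intro z hz
  cases z with
  | zero => exact absurd hz h0
  | pair x y hxy =>
    by_cases hxyeq : x = y
    · subst hxyeq
      have hzW : GIS.pair x x rfl ∈ L := hz
      by_cases hql : x.edges.length ≤ d.edges.length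
      · have hdd : GIS.pair d d rfl ∈ L := mem_diag_right hL htmem
        exact Or.inr ⟨x, W_chain hL h0 hzW hdd hql, rfl⟩
      · push_neg at hql
        obtain ⟨v, s, hv_suf, hvf, hve, hsval, hqe⟩ :=
          rep hL h0 hc hdp hn_pos hplen htmem hte x hzW hql.le
        exact Or.inl ⟨s, s, v, x, x, hxy, hv_suf, rfl, hvf.symm, hqe, hvf.symm, hqe⟩
    · rcases comparab hL h0 hz hz with hs | hs
      · have hzi := mem_inv hL hz
        obtain ⟨r, s, v, hv_suf, hvf, hye, hxe⟩ :=
          HM hL h0 hc hdp hn_pos hplen htmem hte hxy.symm hzi hmin hgap (Ne.symm hxyeq) hs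
        exact Or.inl ⟨s, r, v, x, y, hxy, hv_suf, rfl, hvf.symm, hxe,
          by rw [hvf, hxy], hye⟩
      · obtain ⟨r, s, v, hv_suf, hvf, hxe, hye⟩ :=
          HM hL h0 hc hdp hn_pos hplen htmem hte hxy hz hmin hgap hxyeq hs
        exact Or.inl ⟨r, s, v, x, y, hxy, hv_suf, rfl, hxy.trans hvf.symm, hxe, hvf.symm, hye⟩

end CY2
theorem length_take_of_le' {α : Type _} {l : List α} {m : ℕ} (h : m ≤ l.length) :
    (l.take m).length = m := by
  rw [List.length_take]; omega

section Construct
variable {G : DGraph} {L : Set (GIS G)} (hL : IsCISS G L) (h0 : GIS.zero ∉ L)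
include hL h0

theorem hlenne {x y : G.DPath} (hxy : x.first = y.first) (hm : GIS.pair x y hxy ∈ L)
    (hne : x ≠ y) : x.edges.length ≠ y.edges.length := by
  intro hlen
  rcases comparab hL h0 hm hm with hs | hs
  · exact hne (DGraph.DPath.suffix_antisymm hs hlen.ge)
  · exact hne (DGraph.DPath.suffix_antisymm hs hlen.le).symm

theorem gap_add {g g' : ℤ}
    (h1 : ∃ (a b : G.DPath) (hab : a.first = b.first), GIS.pair a b hab ∈ L ∧
      (a.edges.length : ℤ) - b.edges.length = g)
    (h2 : ∃ (c e : G.DPath) (hce : c.first = e.first), GIS.pair c e hce ∈ L ∧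
      (c.edges.length : ℤ) - e.edges.length = g') :
    ∃ (a b : G.DPath) (hab : a.first = b.first), GIS.pair a b hab ∈ L ∧
      (a.edges.length : ℤ) - b.edges.length = g + g' := by
  obtain ⟨a, b, hab, ham, rfl⟩ := h1
  obtain ⟨c, e, hce, hcm, rfl⟩ := h2
  rcases comparab hL h0 ham hcm with hs | hs
  · obtain ⟨Y, hY, hYmem, hYf, hYe⟩ := comp_right hL ham hcm hs
    refine ⟨a, Y, hY, hYmem, ?_⟩
    have hcb := DGraph.DPath.suffix_len_le hs
    have hYl : Y.edges.length = (b.edges.length - c.edges.length) + e.edges.length := by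
      rw [hYe, List.length_append, length_take_of_le' (by omega)]
    omega
  · obtain ⟨X, hX, hXmem, hXf, hXe⟩ := comp_left hL ham hcm hs
    refine ⟨X, e, hX, hXmem, ?_⟩
    have hbc := DGraph.DPath.suffix_len_le hs
    have hXl : X.edges.length = (c.edges.length - b.edges.length) + a.edges.length := by
      rw [hXe, List.length_append, length_take_of_le' (by omega)]
    omega

theorem construct (hex : ∃ z ∈ L, z * z ≠ z) :
    ∃ (p d : G.DPath) (n : ℕ) (t : G.DPath) (htf : t.first = d.first),
      G.IsCircuit p ∧ d.first = p.first ∧ 0 < n ∧ p.edges.length = n ∧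
      GIS.pair t d htf ∈ L ∧ t.edges = p.edges ++ d.edges ∧
      (∀ (x y : G.DPath) (hxy : x.first = y.first), GIS.pair x y hxy ∈ L → x ≠ y →
        d.edges.length ≤ y.edges.length) ∧
      (∀ (x y : G.DPath) (hxy : x.first = y.first), GIS.pair x y hxy ∈ L →
        (n:ℤ) ∣ ((x.edges.length:ℤ) - y.edges.length)) ∧
      G.NoCommonPrefix p d := by
  classical
  obtain ⟨z, hzmem, hznid⟩ := hex
  obtain ⟨x0, y0, hxy0, rfl⟩ : ∃ (x y : G.DPath) (hxy : x.first = y.first),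
      z = GIS.pair x y hxy := by
    cases z with
    | zero => exact absurd rfl hznid
    | pair a b h => exact ⟨a, b, h, rfl⟩
  have hne0 : x0 ≠ y0 := by
    intro he; subst he; exact hznid (GIS.pair_idem _)
  -- minimal second component of a non-idempotent
  have dSpec : ∃ m : ℕ, ∃ (x y : G.DPath) (hxy : x.first = y.first),
      GIS.pair x y hxy ∈ L ∧ x ≠ y ∧ y.edges.length = m :=
    ⟨y0.edges.length, x0, y0, hxy0, hzmem, hne0, rfl⟩
  obtain ⟨xd, d, hxdf, hxdmem, hxdne, hdlen⟩ := Nat.find_spec dSpec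
  have hmin : ∀ (x y : G.DPath) (hxy : x.first = y.first), GIS.pair x y hxy ∈ L → x ≠ y →
      d.edges.length ≤ y.edges.length := by
    intro x y hxy hm hne
    rw [hdlen]
    exact Nat.find_le ⟨x, y, hxy, hm, hne, rfl⟩
  -- minimal positive gap n
  have gapPos : ∃ m : ℕ, 0 < m ∧ ∃ (a b : G.DPath) (hab : a.first = b.first),
      GIS.pair a b hab ∈ L ∧ (a.edges.length:ℤ) - b.edges.length = (m:ℤ) := by
    have hne' := hlenne hL h0 hxdf hxdmem hxdne
    rcases Nat.lt_or_ge xd.edges.length d.edges.length with hlt | hge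
    · exact ⟨d.edges.length - xd.edges.length, by omega, d, xd, hxdf.symm,
        mem_inv hL hxdmem, by omega⟩
    · exact ⟨xd.edges.length - d.edges.length, by omega, xd, d, hxdf, hxdmem, by omega⟩
  set n := Nat.find gapPos with hn_def
  obtain ⟨hn_pos, a1, b1, hab1, hm1, hglen1⟩ := Nat.find_spec gapPos
  have hgapn : a1.edges.length = b1.edges.length + n := by omega
  -- every nonneg gap is divisible by n
  have gap_dvd_nat : ∀ m : ℕ, (∃ (a b : G.DPath) (hab : a.first = b.first),
      GIS.pair a b hab ∈ L ∧ (a.edges.length:ℤ) - b.edges.length = (m:ℤ)) → n ∣ m := by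
    intro m
    induction m using Nat.strong_induction_on with
    | _ m ih =>
      intro hm
      by_cases hm0 : m = 0
      · subst hm0; exact Dvd.intro 0 rfl
      · have hnm : n ≤ m := by
          by_contra hlt
          push_neg at hlt
          exact Nat.find_min gapPos hlt ⟨Nat.pos_of_ne_zero hm0, hm⟩
        have hneg : ∃ (a b : G.DPath) (hab : a.first = b.first),
            GIS.pair a b hab ∈ L ∧ (a.edges.length:ℤ) - b.edges.length = -(n:ℤ) :=
          ⟨b1, a1, hab1.symm, mem_inv hL hm1, by omega⟩
        have hsum := gap_add hL h0 hm hneg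
        have hcast : (m:ℤ) + -(n:ℤ) = ((m - n : ℕ):ℤ) := by omega
        rw [hcast] at hsum
        have hdvd := ih (m - n) (by omega) hsum
        obtain ⟨c, hc⟩ := hdvd
        exact ⟨c + 1, by rw [Nat.mul_add, Nat.mul_one, ← hc]; omega⟩
  have hgapN : ∀ (x y : G.DPath) (hxy : x.first = y.first), GIS.pair x y hxy ∈ L →
      y.edges.length ≤ x.edges.length → n ∣ (x.edges.length - y.edges.length) := by
    intro x y hxy hm hle
    exact gap_dvd_nat _ ⟨x, y, hxy, hm, by omega⟩
  have hgap : ∀ (x y : G.DPath) (hxy : x.first = y.first), GIS.pair x y hxy ∈ L →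
      (n:ℤ) ∣ ((x.edges.length:ℤ) - y.edges.length) := by
    intro x y hxy hm
    rcases le_or_gt y.edges.length x.edges.length with hle | hlt
    · obtain ⟨c, hc⟩ := hgapN x y hxy hm hle
      refine ⟨c, ?_⟩
      have hcc : ((n:ℤ) * c) = ((n * c : ℕ) : ℤ) := by push_cast; ring
      rw [hcc]; omega
    · obtain ⟨c, hc⟩ := hgapN y x hxy.symm (mem_inv hL hm) hlt.le
      refine ⟨-c, ?_⟩
      have hcc : ((n:ℤ) * c) = ((n * c : ℕ) : ℤ) := by push_cast; ring
      rw [mul_neg, hcc]; omega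
  -- towers of powers
  have tower : ∀ (x y : G.DPath) (hxy : x.first = y.first), GIS.pair x y hxy ∈ L →
      y.edges.length < x.edges.length → ∀ j : ℕ, 1 ≤ j →
      ∃ (X : G.DPath) (hX : X.first = y.first), GIS.pair X y hX ∈ L ∧
        X.edges.length = j * (x.edges.length - y.edges.length) + y.edges.length := by
    intro x y hxy hm hlt j hj
    induction j with
    | zero => omega
    | succ m ihj =>
      by_cases hm0 : m = 0
      · subst hm0
        exact ⟨x, hxy, hm, by omega⟩
      · obtain ⟨Xj, hXj, hXjmem, hXjlen⟩ := ihj (by omega)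
        have hsuffix : y.IsSuffixOf Xj :=
          W_chain hL h0 (mem_diag_right hL hm) (mem_diag_left hL hXjmem) (by omega)
        obtain ⟨X, hX, hXmem, hXf, hXe⟩ := comp_left hL hm hXjmem hsuffix
        refine ⟨X, hX, hXmem, ?_⟩
        have hXlen : X.edges.length = (Xj.edges.length - y.edges.length) + x.edges.length := by
          rw [hXe, List.length_append, length_take_of_le' (by omega)]
        have hdist : (m+1) * (x.edges.length - y.edges.length)
            = m * (x.edges.length - y.edges.length) + (x.edges.length - y.edges.length) := by
          ring
        omega
  -- descent to a gap-n pair over d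
  have descent : ∀ N : ℕ, ∀ (x y : G.DPath) (hxy : x.first = y.first), GIS.pair x y hxy ∈ L →
      y.edges.length = N → x.edges.length = N + n →
      ∃ (t : G.DPath) (ht : t.first = d.first), GIS.pair t d ht ∈ L ∧
        t.edges.length = d.edges.length + n := by
    intro N
    induction N using Nat.strong_induction_on with
    | _ N ihN =>
      intro x y hxy hm hyN hxN
      have hxyne : x ≠ y := by
        intro he; subst he; omega
      have hyd : d.edges.length ≤ y.edges.length := hmin x y hxy hm hxyne
      have hyW : GIS.pair y y rfl ∈ L := mem_diag_right hL hm
      have hdW : GIS.pair d d rfl ∈ L := mem_diag_right hL hxdmem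
      by_cases hcase : y.edges.length = d.edges.length
      · have hsfx : d.IsSuffixOf y := W_chain hL h0 hdW hyW (by omega)
        have hde : d = y := DGraph.DPath.suffix_antisymm hsfx (by omega)
        subst hde
        exact ⟨x, hxy, hm, by omega⟩
      · have hxd_gt : d.edges.length < xd.edges.length := by
          have h1 : d.edges.length ≤ xd.edges.length :=
            hmin d xd hxdf.symm (mem_inv hL hxdmem) (Ne.symm hxdne)
          have h2 := hlenne hL h0 hxdf hxdmem hxdne
          omega
        obtain ⟨k, hk⟩ := hgapN xd d hxdf hxdmem hxd_gt.le
        have hk1 : 1 ≤ k := by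
          rcases Nat.eq_zero_or_pos k with rfl | h
          · simp at hk; omega
          · exact h
        obtain ⟨X2, hX2f, hX2mem, hX2len⟩ := tower xd d hxdf hxdmem hxd_gt 2 (by omega)
        obtain ⟨C, hCf, hCmem, hClen⟩ := tower x y hxy hm (by omega) (2*k - 1) (by omega)
        rw [hk] at hX2len
        have hClen' : C.edges.length = (2*k-1) * n + y.edges.length := by
          rw [hClen, show x.edges.length - y.edges.length = n by omega]
        have hexp : (2*k-1) * n = 2*(n*k) - n := by
          rw [Nat.sub_mul, Nat.one_mul, show 2*k*n = 2*(n*k) by ring]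
        have hnle : n ≤ n * k := Nat.le_mul_of_pos_right n hk1
        have hCW : GIS.pair C C rfl ∈ L := mem_diag_left hL hCmem
        have hX2W : GIS.pair X2 X2 rfl ∈ L := mem_diag_left hL hX2mem
        have hinvC := mem_inv hL hCmem
        rcases lt_trichotomy C.edges.length X2.edges.length with hlt2 | heq2 | hgt2
        · have hsfx : C.IsSuffixOf X2 := W_chain hL h0 hCW hX2W hlt2.le
          obtain ⟨X, hXf2, hXmem, hXf3, hXe⟩ := comp_left hL hinvC hX2mem hsfx
          refine ⟨X, hXf2, hXmem, ?_⟩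
          have htk : X.edges.length = (X2.edges.length - C.edges.length) + y.edges.length := by
            rw [hXe, List.length_append, length_take_of_le' (by omega)]
          omega
        · have hsfx : C.IsSuffixOf X2 := W_chain hL h0 hCW hX2W heq2.le
          have hCeq : C = X2 := DGraph.DPath.suffix_antisymm hsfx (by omega)
          subst hCeq
          have hcomb := hL.2.1 _ hinvC _ hX2mem
          rw [GIS.mul_exact hCf.symm hX2f] at hcomb
          exact ⟨y, _, hcomb, by omega⟩
        · have hsfx : X2.IsSuffixOf C := W_chain hL h0 hX2W hCW hgt2.le
          obtain ⟨Y, hYf, hYmem, hYf2, hYe⟩ := comp_right hL hinvC hX2mem hsfx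
          have hYlen : Y.edges.length = (C.edges.length - X2.edges.length) + d.edges.length := by
            rw [hYe, List.length_append, length_take_of_le' (by omega)]
          exact ihN (y.edges.length - n) (by omega) y Y hYf hYmem (by omega) (by omega)
  obtain ⟨t, htf, htmem, htlen⟩ := descent b1.edges.length a1 b1 hab1 hm1 rfl hgapn
  -- construct p
  have htne : t ≠ d := by
    intro he; rw [he] at htlen; omega
  have hdt : d.IsSuffixOf t :=
    W_chain hL h0 (mem_diag_right hL htmem) (mem_diag_left hL htmem) (by omega)
  obtain ⟨l, hl, hlf⟩ := hdt
  have hllen : l.length = n := by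
    have := congrArg List.length hl; simp at this; omega
  have hwalkl : G.IsWalk d.first l := by
    have hw := t.wf
    rw [hl, G.isWalk_append] at hw
    rw [← htf]
    exact hw.1
  refine ⟨⟨d.first, l, hwalkl⟩, d, n, t, htf, ⟨?_, ?_⟩, rfl, hn_pos, hllen, htmem, hl, hmin,
    hgap, ?_⟩
  · -- l ≠ []
    intro hnil
    have hln : l = [] := hnil
    rw [hln] at hllen
    simp at hllen
    omega
  · -- circuit: last = first
    show G.walkEnd d.first l = d.first
    conv_lhs => rw [← htf]
    exact hlf.symm
  · -- no common prefix
    intro lst hlst hpre hdre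
    obtain ⟨e, lst', rfl⟩ : ∃ e lst', lst = e :: lst' := by
      cases lst with
      | nil => exact absurd rfl hlst
      | cons e lst' => exact ⟨e, lst', rfl⟩
    obtain ⟨pr, hpr⟩ := hpre
    obtain ⟨dr, hdr⟩ := hdre
    have hpr' : (e :: lst') ++ pr = l := hpr
    have hte' : t.edges = e :: ((lst' ++ pr) ++ d.edges) := by
      rw [hl, ← hpr']; simp
    have hde' : d.edges = e :: (lst' ++ dr) := by
      rw [← hdr]; simp
    have hwt : G.IsWalk (G.tgt e) ((lst' ++ pr) ++ d.edges) := by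
      have hw := t.wf
      rw [hte', G.isWalk_cons] at hw
      exact hw.2
    have hwd : G.IsWalk (G.tgt e) (lst' ++ dr) := by
      have hw := d.wf
      rw [hde', G.isWalk_cons] at hw
      exact hw.2
    have hmem2 : GIS.pair ⟨G.tgt e, (lst' ++ pr) ++ d.edges, hwt⟩ ⟨G.tgt e, lst' ++ dr, hwd⟩
        rfl ∈ L := by
      refine hL.2.2.2 _ htmem _ (GIS.le_strip (a' := ⟨G.tgt e, (lst' ++ pr) ++ d.edges, hwt⟩)
        (b' := ⟨G.tgt e, lst' ++ dr, hwd⟩) htf rfl [e] ?_ ?_ ?_)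
      · rw [hte']; rfl
      · rw [hde']; rfl
      · rfl
    have ht2ne : (⟨G.tgt e, (lst' ++ pr) ++ d.edges, hwt⟩ : G.DPath)
        ≠ ⟨G.tgt e, lst' ++ dr, hwd⟩ := by
      intro he
      have hlen := congrArg (fun q : G.DPath => q.edges.length) he
      have hdl := congrArg List.length hde'
      simp at hlen hdl
      omega
    have hfin := hmin ⟨G.tgt e, (lst' ++ pr) ++ d.edges, hwt⟩ ⟨G.tgt e, lst' ++ dr, hwd⟩
      rfl hmem2 ht2ne
    have hdl := congrArg List.length hde'
    simp at hfin hdl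
    omega


end Construct
section Assemble
variable {G : DGraph} {L : Set (GIS G)}

theorem chain_case (hL : IsCISS G L) (h0 : GIS.zero ∉ L) (hid : ∀ z ∈ L, z * z = z) :
    IsChainOfIdem G L := by
  refine ⟨hid, ?_⟩
  have hdiag : ∀ x ∈ L, ∃ (q : G.DPath) (h : q.first = q.first), x = GIS.pair q q h := by
    intro x hx
    cases x with
    | zero => exact absurd hx h0
    | pair a b h =>
      have := GIS.eq_of_pair_idem h (hid _ hx)
      subst this
      exact ⟨a, h, rfl⟩
  intro x hx y hy
  obtain ⟨q1, hq1, rfl⟩ := hdiag x hx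
  obtain ⟨q2, hq2, rfl⟩ := hdiag y hy
  rcases comparab hL h0 hx hy with hs | hs
  · obtain ⟨l, hl, hf⟩ := hs
    exact Or.inl (GIS.le_strip hq1 hq2 l hl hl hf)
  · obtain ⟨l, hl, hf⟩ := hs
    exact Or.inr (GIS.le_strip hq2 hq1 l hl hl hf)

theorem cycleSet_mem_family (p d : G.DPath) (hc : G.IsCircuit p) (hdp : d.first = p.first)
    (r : ℕ) :
    GIS.pair (⟨p.first, powEdges p r ++ d.edges, isWalk_pow_d hc hdp r⟩ : G.DPath)
      (⟨p.first, powEdges p 0 ++ d.edges, isWalk_pow_d hc hdp 0⟩ : G.DPath) rfl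
        ∈ cycleSet G p d := by
  exact Or.inl ⟨r, 0, ⟨p.first, [], trivial⟩,
    ⟨p.first, powEdges p r ++ d.edges, isWalk_pow_d hc hdp r⟩,
    ⟨p.first, powEdges p 0 ++ d.edges, isWalk_pow_d hc hdp 0⟩, rfl,
    ⟨p.edges, by simp, hc.2.symm⟩, rfl, rfl, by simp, rfl, by simp⟩

theorem cycleSet_infinite (p d : G.DPath) (hc : G.IsCircuit p) (hdp : d.first = p.first) :
    (cycleSet G p d).Infinite := by
  have hn : 0 < p.edges.length := List.length_pos_iff.mpr hc.1
  apply Set.infinite_of_injective_forall_mem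
    (f := fun r : ℕ => GIS.pair (⟨p.first, powEdges p r ++ d.edges, isWalk_pow_d hc hdp r⟩ : G.DPath)
      (⟨p.first, powEdges p 0 ++ d.edges, isWalk_pow_d hc hdp 0⟩ : G.DPath) rfl)
  · intro r1 r2 h
    injection h with h1 h2
    have hc2 := congrArg (fun q : G.DPath => q.edges.length) h1
    simp only [List.length_append, powEdges_length] at hc2
    have : r1 * p.edges.length = r2 * p.edges.length := by omega
    exact Nat.eq_of_mul_eq_mul_right hn this
  · intro r
    exact cycleSet_mem_family p d hc hdp r

theorem cycleSet_nonidem (p d : G.DPath) (hc : G.IsCircuit p) (hdp : d.first = p.first) :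
    ∃ x ∈ cycleSet G p d, x * x ≠ x := by
  have hn : 0 < p.edges.length := List.length_pos_iff.mpr hc.1
  refine ⟨_, cycleSet_mem_family p d hc hdp 1, ?_⟩
  intro hid
  have := GIS.eq_of_pair_idem _ hid
  have hlen := congrArg (fun q : G.DPath => q.edges.length) this
  simp only [List.length_append, powEdges_length] at hlen
  omega

end Assemble
/-- every proper closed inverse subsemigroup of `S(Γ)` is of exactly
one of three types: a finite chain of idempotents, an infinite chain of idempotents,
or of cycle type `L_{p,d}`. -/
theorem stmt_6 (G : DGraph) [Fintype G.V] [Fintype G.E] (L : Set (GIS G))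
    (hL : IsCISS G L) (hproper : L ≠ Set.univ) :
    ((IsChainOfIdem G L ∧ L.Finite) ∨ (IsChainOfIdem G L ∧ L.Infinite) ∨
      (∃ p d : G.DPath, G.IsCircuit p ∧ d.first = p.first ∧ G.NoCommonPrefix p d ∧
        L = cycleSet G p d)) ∧
    ¬((IsChainOfIdem G L ∧ L.Finite) ∧ (IsChainOfIdem G L ∧ L.Infinite)) ∧
    ¬((IsChainOfIdem G L ∧ L.Finite) ∧ (∃ p d : G.DPath, G.IsCircuit p ∧ d.first = p.first ∧ G.NoCommonPrefix p d ∧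
        L = cycleSet G p d)) ∧
    ¬((IsChainOfIdem G L ∧ L.Infinite) ∧ (∃ p d : G.DPath, G.IsCircuit p ∧ d.first = p.first ∧ G.NoCommonPrefix p d ∧
        L = cycleSet G p d)) := by
  refine ⟨?_, ?_, ?_, ?_⟩
  · have h0 : GIS.zero ∉ L := fun hz => hproper (L_univ_of_zero hL hz)
    by_cases hid : ∀ z ∈ L, z * z = z
    · have hchain := chain_case hL h0 hid
      rcases L.finite_or_infinite with hf | hi
      · exact Or.inl ⟨hchain, hf⟩
      · exact Or.inr (Or.inl ⟨hchain, hi⟩)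
    · push_neg at hid
      obtain ⟨p, d, n, t, htf, hcirc, hdp, hn_pos, hplen, htmem, hte, hmin, hgap, hncp⟩ :=
        construct hL h0 hid
      refine Or.inr (Or.inr ⟨p, d, hcirc, hdp, hncp, ?_⟩)
      exact Set.Subset.antisymm
        (cy_subset hL h0 hcirc hdp hn_pos hplen htmem hte hmin hgap)
        (cy_supset hL h0 hcirc hdp hn_pos hplen htmem hte)
  · rintro ⟨⟨-, hf⟩, ⟨-, hi⟩⟩
    exact hi hf
  · rintro ⟨⟨-, hf⟩, ⟨p, d, hcirc, hdp, -, rfl⟩⟩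
    exact cycleSet_infinite p d hcirc hdp hf
  · rintro ⟨⟨⟨hidem, -⟩, -⟩, ⟨p, d, hcirc, hdp, -, rfl⟩⟩
    obtain ⟨x, hx, hnid⟩ := cycleSet_nonidem p d hcirc hdp
    exact hnid (hidem x hx)
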